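/- Let A_1, ..., A_T ∈ ℝ^{n×m}, let σ = max{σ' : σ' is a singular value of some A_i} with σ > 0, suppose the EG step sizes satisfy α = γ < 1/σ, and let Ã = M_EG(A_T)···M_EG(A_1). Then ker((Ã − I)²) = ker(Ã − I); that is, every Jordan block of Ã corresponding to the eigenvalue 1 has size 1 (the eigenvalue 1, if present, is semisimple). -/

import Mathlib

open Matrix

/-- Spectral (operator 2-)norm of a real matrix; this is also its largest singular value. -/
noncomputable def mnorm2 {ι κ : Type*} [Fintype ι] [Fintype κ] [DecidableEq κ]
    (M : Matrix ι κ ℝ) : ℝ :=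
  ‖LinearMap.toContinuousLinearMap (Matrix.toEuclideanLin M)‖

/-- The extra-gradient (EG) iterative matrix
`M_EG(A) = [[I − αγ A Aᵀ, −α A], [α Aᵀ, I − αγ Aᵀ A]]`. -/
noncomputable def MEG {n m : ℕ} (α γ : ℝ) (A : Matrix (Fin n) (Fin m) ℝ) :
    Matrix (Fin n ⊕ Fin m) (Fin n ⊕ Fin m) ℝ :=
  fromBlocks (1 - (α * γ) • (A * Aᵀ)) ((-α) • A) (α • Aᵀ) (1 - (α * γ) • (Aᵀ * A))

/-- `periodProd α γ A k = M_EG(A_{k-1}) ⋯ M_EG(A_1) M_EG(A_0)`. -/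
noncomputable def periodProd {n m : ℕ} (α γ : ℝ) (A : ℕ → Matrix (Fin n) (Fin m) ℝ) :
    ℕ → Matrix (Fin n ⊕ Fin m) (Fin n ⊕ Fin m) ℝ
  | 0 => 1
  | k + 1 => MEG α γ (A k) * periodProd α γ A k

lemma euc_norm_sq {ι : Type*} [Fintype ι] (w : ι → ℝ) :
    ‖(WithLp.equiv 2 (ι → ℝ)).symm w‖ ^ 2 = w ⬝ᵥ w := by
  rw [EuclideanSpace.norm_eq, Real.sq_sqrt (by positivity)]
  simp [dotProduct, sq]

lemma mulVec_dot_le {ι κ : Type*} [Fintype ι] [Fintype κ] [DecidableEq κ]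
    (B : Matrix ι κ ℝ) (u : κ → ℝ) :
    (B *ᵥ u) ⬝ᵥ (B *ᵥ u) ≤ (mnorm2 B) ^ 2 * (u ⬝ᵥ u) := by
  have h := (LinearMap.toContinuousLinearMap (Matrix.toEuclideanLin B)).le_opNorm
    ((WithLp.equiv 2 (κ → ℝ)).symm u)
  have happ : (LinearMap.toContinuousLinearMap (Matrix.toEuclideanLin B))
      ((WithLp.equiv 2 (κ → ℝ)).symm u) = (WithLp.equiv 2 (ι → ℝ)).symm (B *ᵥ u) := by
    simp [LinearMap.coe_toContinuousLinearMap', Matrix.toEuclideanLin_toLp,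
      Matrix.toLin'_apply]
  rw [happ] at h
  have h2 : ‖(WithLp.equiv 2 (ι → ℝ)).symm (B *ᵥ u)‖ ^ 2 ≤
      (mnorm2 B) ^ 2 * ‖(WithLp.equiv 2 (κ → ℝ)).symm u‖ ^ 2 := by
    rw [← mul_pow]
    exact pow_le_pow_left₀ (norm_nonneg _) h 2
  rw [euc_norm_sq, euc_norm_sq] at h2
  exact h2

lemma dot_self_nonneg {ι : Type*} [Fintype ι] (v : ι → ℝ) : 0 ≤ v ⬝ᵥ v :=
  Finset.sum_nonneg fun _ _ => mul_self_nonneg _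

lemma transpose_mulVec_dot_le {ι κ : Type*} [Fintype ι] [Fintype κ] [DecidableEq κ]
    (B : Matrix ι κ ℝ) (w : ι → ℝ) :
    (Bᵀ *ᵥ w) ⬝ᵥ (Bᵀ *ᵥ w) ≤ (mnorm2 B) ^ 2 * (w ⬝ᵥ w) := by
  set t := (Bᵀ *ᵥ w) ⬝ᵥ (Bᵀ *ᵥ w) with ht
  have ht0 : 0 ≤ t := dot_self_nonneg _
  have key : t = (B *ᵥ (Bᵀ *ᵥ w)) ⬝ᵥ w := by
    rw [ht, dotProduct_mulVec, vecMul_transpose]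
  have cs : ((B *ᵥ (Bᵀ *ᵥ w)) ⬝ᵥ w) ^ 2 ≤
      ((B *ᵥ (Bᵀ *ᵥ w)) ⬝ᵥ (B *ᵥ (Bᵀ *ᵥ w))) * (w ⬝ᵥ w) := by
    have := Finset.sum_mul_sq_le_sq_mul_sq Finset.univ (B *ᵥ (Bᵀ *ᵥ w)) w
    simpa [dotProduct, sq] using this
  have h1 : (B *ᵥ (Bᵀ *ᵥ w)) ⬝ᵥ (B *ᵥ (Bᵀ *ᵥ w)) ≤ (mnorm2 B) ^ 2 * t :=
    mulVec_dot_le B _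
  have hw0 : 0 ≤ w ⬝ᵥ w := dot_self_nonneg _
  rcases eq_or_lt_of_le ht0 with h | h
  · nlinarith [sq_nonneg (mnorm2 B)]
  · nlinarith [sq_nonneg (mnorm2 B)]

lemma MEG_mtm {n m : ℕ} (α : ℝ) (A : Matrix (Fin n) (Fin m) ℝ) :
    (MEG α α A)ᵀ * (MEG α α A) =
    fromBlocks (1 - (α ^ 2) • (A * Aᵀ) + (α ^ 4) • ((A * Aᵀ) * (A * Aᵀ))) 0 0
      (1 - (α ^ 2) • (Aᵀ * A) + (α ^ 4) • ((Aᵀ * A) * (Aᵀ * A))) := by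
  unfold MEG
  rw [fromBlocks_transpose, fromBlocks_multiply]
  simp only [transpose_sub, transpose_smul, transpose_mul, transpose_transpose, transpose_one,
    Matrix.sub_mul, Matrix.mul_sub, Matrix.smul_mul, Matrix.mul_smul, Matrix.mul_one,
    Matrix.one_mul, smul_smul, Matrix.mul_assoc]
  exact fromBlocks_inj.mpr ⟨by module, by module, by module, by module⟩

lemma MEG_contract {n m : ℕ} {α : ℝ} (hα : 0 ≤ α) (A : Matrix (Fin n) (Fin m) ℝ)
    (hm : α * mnorm2 A ≤ 1) (v : Fin n ⊕ Fin m → ℝ) :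
    ((MEG α α A) *ᵥ v) ⬝ᵥ ((MEG α α A) *ᵥ v) ≤ v ⬝ᵥ v := by
  set M := MEG α α A with hM
  have key : (M *ᵥ v) ⬝ᵥ (M *ᵥ v) = v ⬝ᵥ ((Mᵀ * M) *ᵥ v) := by
    rw [dotProduct_mulVec v, ← vecMul_vecMul, vecMul_transpose, dotProduct_mulVec]
  rw [key, hM, MEG_mtm]
  have hv : v = Sum.elim (v ∘ Sum.inl) (v ∘ Sum.inr) := by
    funext i; cases i <;> rfl
  set x := v ∘ Sum.inl
  set y := v ∘ Sum.inr
  rw [fromBlocks_mulVec]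
  conv_lhs => rw [hv]
  conv_rhs => rw [hv]
  rw [sumElim_dotProduct_sumElim, sumElim_dotProduct_sumElim]
  simp only [Matrix.zero_mulVec, add_zero, zero_add]
  set u := Aᵀ *ᵥ x with hu
  set w := A *ᵥ y with hw
  have e1 : x ⬝ᵥ ((1 - (α ^ 2) • (A * Aᵀ) + (α ^ 4) • ((A * Aᵀ) * (A * Aᵀ))) *ᵥ x)
      = x ⬝ᵥ x - α ^ 2 * (u ⬝ᵥ u) + α ^ 4 * ((A *ᵥ u) ⬝ᵥ (A *ᵥ u)) := by
    rw [Matrix.add_mulVec, Matrix.sub_mulVec, dotProduct_add, dotProduct_sub,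
      Matrix.smul_mulVec, Matrix.smul_mulVec, dotProduct_smul, dotProduct_smul,
      Matrix.one_mulVec]
    have hPx : x ⬝ᵥ ((A * Aᵀ) *ᵥ x) = u ⬝ᵥ u := by
      rw [← Matrix.mulVec_mulVec, dotProduct_mulVec, ← Matrix.mulVec_transpose, ← hu]
    have hPPx : x ⬝ᵥ (((A * Aᵀ) * (A * Aᵀ)) *ᵥ x) = (A *ᵥ u) ⬝ᵥ (A *ᵥ u) := by
      rw [← Matrix.mulVec_mulVec, ← Matrix.mulVec_mulVec, ← Matrix.mulVec_mulVec,
        dotProduct_mulVec, ← Matrix.mulVec_transpose, ← hu, dotProduct_mulVec, vecMul_transpose]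
    rw [hPx, hPPx]; simp [smul_eq_mul]
  have e2 : y ⬝ᵥ ((1 - (α ^ 2) • (Aᵀ * A) + (α ^ 4) • ((Aᵀ * A) * (Aᵀ * A))) *ᵥ y)
      = y ⬝ᵥ y - α ^ 2 * (w ⬝ᵥ w) + α ^ 4 * ((Aᵀ *ᵥ w) ⬝ᵥ (Aᵀ *ᵥ w)) := by
    rw [Matrix.add_mulVec, Matrix.sub_mulVec, dotProduct_add, dotProduct_sub,
      Matrix.smul_mulVec, Matrix.smul_mulVec, dotProduct_smul, dotProduct_smul,
      Matrix.one_mulVec]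
    have hPy : y ⬝ᵥ ((Aᵀ * A) *ᵥ y) = w ⬝ᵥ w := by
      rw [← Matrix.mulVec_mulVec, dotProduct_mulVec, ← Matrix.mulVec_transpose,
        transpose_transpose, ← hw]
    have hPPy : y ⬝ᵥ (((Aᵀ * A) * (Aᵀ * A)) *ᵥ y) = (Aᵀ *ᵥ w) ⬝ᵥ (Aᵀ *ᵥ w) := by
      rw [← Matrix.mulVec_mulVec, ← Matrix.mulVec_mulVec, ← Matrix.mulVec_mulVec,
        dotProduct_mulVec, ← Matrix.mulVec_transpose, transpose_transpose, ← hw,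
        dotProduct_mulVec, ← Matrix.mulVec_transpose]
    rw [hPy, hPPy]; simp [smul_eq_mul]
  simp only [Sum.elim_comp_inl, Sum.elim_comp_inr]
  rw [e1, e2]
  have hAu : (A *ᵥ u) ⬝ᵥ (A *ᵥ u) ≤ (mnorm2 A) ^ 2 * (u ⬝ᵥ u) := mulVec_dot_le A u
  have hAtw : (Aᵀ *ᵥ w) ⬝ᵥ (Aᵀ *ᵥ w) ≤ (mnorm2 A) ^ 2 * (w ⬝ᵥ w) := transpose_mulVec_dot_le A w
  have hu0 : 0 ≤ u ⬝ᵥ u := dot_self_nonneg _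
  have hw0 : 0 ≤ w ⬝ᵥ w := dot_self_nonneg _
  have hm0 : 0 ≤ mnorm2 A := norm_nonneg _
  have hsq : α ^ 2 * (mnorm2 A) ^ 2 ≤ 1 := by nlinarith [mul_nonneg hα hm0]
  have b1 : α ^ 4 * ((A *ᵥ u) ⬝ᵥ (A *ᵥ u)) ≤ α ^ 2 * (u ⬝ᵥ u) := by
    have h4 : (0:ℝ) ≤ α ^ 4 := by positivity
    calc α ^ 4 * ((A *ᵥ u) ⬝ᵥ (A *ᵥ u)) ≤ α ^ 4 * ((mnorm2 A) ^ 2 * (u ⬝ᵥ u)) := by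
          exact mul_le_mul_of_nonneg_left hAu h4
      _ = (α ^ 2 * (mnorm2 A) ^ 2) * (α ^ 2 * (u ⬝ᵥ u)) := by ring
      _ ≤ 1 * (α ^ 2 * (u ⬝ᵥ u)) := by
          apply mul_le_mul_of_nonneg_right hsq; positivity
      _ = α ^ 2 * (u ⬝ᵥ u) := one_mul _
  have b2 : α ^ 4 * ((Aᵀ *ᵥ w) ⬝ᵥ (Aᵀ *ᵥ w)) ≤ α ^ 2 * (w ⬝ᵥ w) := by
    have h4 : (0:ℝ) ≤ α ^ 4 := by positivity
    calc α ^ 4 * ((Aᵀ *ᵥ w) ⬝ᵥ (Aᵀ *ᵥ w)) ≤ α ^ 4 * ((mnorm2 A) ^ 2 * (w ⬝ᵥ w)) := by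
          exact mul_le_mul_of_nonneg_left hAtw h4
      _ = (α ^ 2 * (mnorm2 A) ^ 2) * (α ^ 2 * (w ⬝ᵥ w)) := by ring
      _ ≤ 1 * (α ^ 2 * (w ⬝ᵥ w)) := by
          apply mul_le_mul_of_nonneg_right hsq; positivity
      _ = α ^ 2 * (w ⬝ᵥ w) := one_mul _
  linarith

lemma periodProd_contract {n m : ℕ} {α σ : ℝ} (hα : 0 ≤ α) (hσ : 0 ≤ σ) (hασ : α * σ ≤ 1)
    (A : ℕ → Matrix (Fin n) (Fin m) ℝ) (k : ℕ) (hk : ∀ i < k, mnorm2 (A i) ≤ σ)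
    (v : Fin n ⊕ Fin m → ℝ) :
    ((periodProd α α A k) *ᵥ v) ⬝ᵥ ((periodProd α α A k) *ᵥ v) ≤ v ⬝ᵥ v := by
  induction k generalizing v with
  | zero => simp [periodProd]
  | succ k ih =>
    have hstep : mnorm2 (A k) ≤ σ := hk k (Nat.lt_succ_self k)
    have hm : α * mnorm2 (A k) ≤ 1 := by
      calc α * mnorm2 (A k) ≤ α * σ := mul_le_mul_of_nonneg_left hstep hα
        _ ≤ 1 := hασ
    have hk' : ∀ i < k, mnorm2 (A i) ≤ σ := fun i hi => hk i (hi.trans (Nat.lt_succ_self k))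
    calc ((periodProd α α A (k + 1)) *ᵥ v) ⬝ᵥ ((periodProd α α A (k + 1)) *ᵥ v)
        = ((MEG α α (A k)) *ᵥ ((periodProd α α A k) *ᵥ v)) ⬝ᵥ
          ((MEG α α (A k)) *ᵥ ((periodProd α α A k) *ᵥ v)) := by
          rw [periodProd, ← Matrix.mulVec_mulVec]
      _ ≤ ((periodProd α α A k) *ᵥ v) ⬝ᵥ ((periodProd α α A k) *ᵥ v) :=
          MEG_contract hα (A k) hm _
      _ ≤ v ⬝ᵥ v := ih hk' v

/-- For matrices `A_0, …, A_{T-1}` with largest singular value `σ > 0` and EG step sizes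
`α = γ < 1/σ`, and `Ã = M_EG(A_{T-1}) ⋯ M_EG(A_0)`, one has
`ker((Ã − I)²) = ker(Ã − I)`: the eigenvalue `1` of `Ã` (if present) is semisimple, i.e. all
its Jordan blocks have size `1`. -/
theorem stmt12 {n m : ℕ} (T : ℕ) (hT : 0 < T)
    (A : ℕ → Matrix (Fin n) (Fin m) ℝ)
    (σ : ℝ)
    (hσdef : σ = (Finset.range T).sup' (Finset.nonempty_range_iff.mpr hT.ne')
        (fun i => mnorm2 (A i)))
    (hσpos : 0 < σ)
    (α γ : ℝ) (hα : 0 < α) (hαγ : α = γ) (hstep : α < 1 / σ) :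
    ∀ v : Fin n ⊕ Fin m → ℝ,
      ((periodProd α γ A T - 1) * (periodProd α γ A T - 1)).mulVec v = 0 ↔
        (periodProd α γ A T - 1).mulVec v = 0 := by
  subst hαγ
  intro v
  set Bt := periodProd α α A T with hBt
  have hbound : ∀ i < T, mnorm2 (A i) ≤ σ := by
    intro i hi
    rw [hσdef]
    exact Finset.le_sup' (fun i => mnorm2 (A i)) (Finset.mem_range.mpr hi)
  have hασ : α * σ ≤ 1 := by
    have := (lt_div_iff₀ hσpos).mp hstep
    linarith
  have hcontract : ∀ u : Fin n ⊕ Fin m → ℝ, (Bt *ᵥ u) ⬝ᵥ (Bt *ᵥ u) ≤ u ⬝ᵥ u :=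
    fun u => periodProd_contract hα.le hσpos.le hασ A T hbound u
  constructor
  · intro h
    set w := (Bt - 1) *ᵥ v with hwdef
    have hw : Bt *ᵥ w = w := by
      have h0 : (Bt - 1) *ᵥ w = 0 := by
        rw [hwdef, Matrix.mulVec_mulVec, h]
      rw [Matrix.sub_mulVec, Matrix.one_mulVec, sub_eq_zero] at h0
      exact h0
    have hv : Bt *ᵥ v = v + w := by
      rw [hwdef, Matrix.sub_mulVec, Matrix.one_mulVec]
      abel
    suffices hsuff : w = 0 by
      rw [hwdef] at hsuff; exact hsuff
    have hk : ∀ k : ℕ, (v + (k : ℝ) • w) ⬝ᵥ (v + (k : ℝ) • w) ≤ v ⬝ᵥ v := by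
      intro k
      induction k with
      | zero => simp
      | succ k ih =>
        have hit : Bt *ᵥ (v + (k : ℝ) • w) = v + ((k : ℝ) + 1) • w := by
          rw [Matrix.mulVec_add, Matrix.mulVec_smul, hv, hw, add_smul, one_smul]
          abel
        have hcast : ((k + 1 : ℕ) : ℝ) = (k : ℝ) + 1 := by push_cast; ring
        rw [hcast, ← hit]
        exact (hcontract _).trans ih
    have hquad : ∀ k : ℕ, 2 * (k : ℝ) * (v ⬝ᵥ w) + (k : ℝ) ^ 2 * (w ⬝ᵥ w) ≤ 0 := by
      intro k
      have := hk k
      have hexp : (v + (k : ℝ) • w) ⬝ᵥ (v + (k : ℝ) • w)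
          = v ⬝ᵥ v + 2 * (k : ℝ) * (v ⬝ᵥ w) + (k : ℝ) ^ 2 * (w ⬝ᵥ w) := by
        rw [dotProduct_add, add_dotProduct, add_dotProduct, smul_dotProduct,
          dotProduct_smul, smul_dotProduct, dotProduct_smul, dotProduct_comm w v]
        simp [smul_eq_mul]; ring
      rw [hexp] at this
      linarith
    have hww : w ⬝ᵥ w ≤ 0 := by
      by_contra hpos
      push_neg at hpos
      set s := v ⬝ᵥ w
      set t := w ⬝ᵥ w
      set k : ℕ := ⌈(2 * |s| + 1) / t⌉₊ with hkdef
      have hk1 : ((2 * |s| + 1) / t) ≤ (k : ℝ) := Nat.le_ceil _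
      have hkt : 2 * |s| + 1 ≤ (k : ℝ) * t := by
        rw [div_le_iff₀ hpos] at hk1
        linarith
      have hkpos : (0 : ℝ) < k := by
        rcases Nat.eq_zero_or_pos k with h0 | h0
        · exfalso; rw [h0] at hkt; push_cast at hkt
          have : (0:ℝ) ≤ |s| := abs_nonneg s
          linarith
        · exact_mod_cast h0
      have hq := hquad k
      have habs : -|s| ≤ s := neg_abs_le s
      nlinarith
    have hww0 : 0 ≤ w ⬝ᵥ w := dot_self_nonneg w
    have : w ⬝ᵥ w = 0 := le_antisymm hww hww0
    exact dotProduct_self_eq_zero.mp this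
  · intro h
    rw [← Matrix.mulVec_mulVec, h, Matrix.mulVec_zero]
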